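/- arXiv:2103.05452 — 2 statements merged into one kernel-verified Lean document; each statement's English description precedes it below -/
import Mathlib

section
/- Let s ≥ 1 and let i, j ∈ {0,…,s−1} with i ≠ j. Let st(0̄) denote the stabiliser in Aut(T) of the infinite ray 0̄ = {0^n : n ∈ ℕ}. Then every element of β_i(st(0̄)) commutes with every element of β_j(st(0̄)), i.e. [β_i(st(0̄)), β_j(st(0̄))] = 1. -/
/-!
Groups of automorphisms of the `m`-regular rooted tree, encoded via portraits:
an automorphism is determined by the family of its labels (local actions)
`label : List (Fin m) → Equiv.Perm (Fin m)`.
-/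

namespace Basilica

/-- An automorphism of the `m`-regular rooted tree, given by its portrait. -/
structure TreeAut (m : ℕ) where
  label : List (Fin m) → Equiv.Perm (Fin m)

namespace TreeAut

variable {m : ℕ}

lemma ext_label {a b : TreeAut m} (h : ∀ u, a.label u = b.label u) : a = b := by
  cases a
  cases b
  simp only [mk.injEq]
  exact funext h

/-- The section of an automorphism at a vertex. -/
def sec (a : TreeAut m) (v : List (Fin m)) : TreeAut m := ⟨fun u => a.label (v ++ u)⟩

@[simp] lemma sec_label (a : TreeAut m) (v u : List (Fin m)) :
    (a.sec v).label u = a.label (v ++ u) := rfl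

@[simp] lemma sec_nil (a : TreeAut m) : a.sec [] = a := rfl

lemma sec_sec (a : TreeAut m) (v w : List (Fin m)) : (a.sec v).sec w = a.sec (v ++ w) :=
  ext_label fun u => by simp [List.append_assoc]

/-- The action of a tree automorphism on the vertices (finite words). -/
def apply : TreeAut m → List (Fin m) → List (Fin m)
  | _, [] => []
  | a, x :: u => a.label [] x :: (a.sec [x]).apply u

/-- The inverse action of a tree automorphism on the vertices. -/
def invApply : TreeAut m → List (Fin m) → List (Fin m)
  | _, [] => []
  | a, x :: u => (a.label [])⁻¹ x :: (a.sec [(a.label [])⁻¹ x]).invApply u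

instance : One (TreeAut m) := ⟨⟨fun _ => 1⟩⟩
instance : Mul (TreeAut m) := ⟨fun a b => ⟨fun u => a.label (b.apply u) * b.label u⟩⟩
instance : Inv (TreeAut m) := ⟨fun a => ⟨fun u => (a.label (a.invApply u))⁻¹⟩⟩

@[simp] lemma one_label (u : List (Fin m)) : (1 : TreeAut m).label u = 1 := rfl

@[simp] lemma mul_label (a b : TreeAut m) (u : List (Fin m)) :
    (a * b).label u = a.label (b.apply u) * b.label u := rfl

@[simp] lemma inv_label (a : TreeAut m) (u : List (Fin m)) :
    a⁻¹.label u = (a.label (a.invApply u))⁻¹ := rfl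

@[simp] lemma one_sec (v : List (Fin m)) : (1 : TreeAut m).sec v = 1 := rfl

@[simp] lemma apply_nil (a : TreeAut m) : a.apply [] = [] := rfl

lemma apply_cons (a : TreeAut m) (x : Fin m) (u : List (Fin m)) :
    a.apply (x :: u) = a.label [] x :: (a.sec [x]).apply u := rfl

@[simp] lemma one_apply (u : List (Fin m)) : (1 : TreeAut m).apply u = u := by
  induction u with
  | nil => rfl
  | cons x u ih => simp [apply_cons, ih]

lemma apply_append (a : TreeAut m) (v u : List (Fin m)) :
    a.apply (v ++ u) = a.apply v ++ (a.sec v).apply u := by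
  induction v generalizing a with
  | nil => simp
  | cons x v ih =>
      simp only [List.cons_append, apply_cons, ih, sec_sec, List.singleton_append,
        List.nil_append]

lemma mul_sec (a b : TreeAut m) (v : List (Fin m)) :
    (a * b).sec v = a.sec (b.apply v) * b.sec v :=
  ext_label fun u => by simp [apply_append]

lemma mul_apply (a b : TreeAut m) (u : List (Fin m)) :
    (a * b).apply u = a.apply (b.apply u) := by
  induction u generalizing a b with
  | nil => rfl
  | cons x u ih =>
      rw [apply_cons, mul_sec, ih]
      simp [apply_cons, Equiv.Perm.mul_apply]

lemma invApply_apply (a : TreeAut m) (u : List (Fin m)) : a.invApply (a.apply u) = u := by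
  induction u generalizing a with
  | nil => rfl
  | cons x u ih => simp [apply_cons, invApply, ih]

lemma apply_invApply (a : TreeAut m) (u : List (Fin m)) : a.apply (a.invApply u) = u := by
  induction u generalizing a with
  | nil => rfl
  | cons x u ih => simp [invApply, apply_cons, ih]

instance : Group (TreeAut m) where
  mul_assoc a b c := ext_label fun u => by simp [mul_apply, mul_assoc]
  one_mul a := ext_label fun u => by simp
  mul_one a := ext_label fun u => by simp
  inv_mul_cancel a := ext_label fun u => by simp [invApply_apply]

lemma apply_injective (a : TreeAut m) : Function.Injective a.apply := by
  intro x y h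
  have hx := invApply_apply a x
  rw [h, invApply_apply] at hx
  exact hx.symm

@[simp] lemma apply_length (a : TreeAut m) (u : List (Fin m)) :
    (a.apply u).length = u.length := by
  induction u generalizing a with
  | nil => rfl
  | cons x u ih => simp [apply_cons, ih]

/-- `cons ρ f` is `ρ · ψ₁⁻¹(f 0, …, f (m-1))`: the automorphism with root label `ρ`
and first-layer sections `f x`. -/
def cons (ρ : Equiv.Perm (Fin m)) (f : Fin m → TreeAut m) : TreeAut m :=
  ⟨fun u =>
    match u with
    | [] => ρ
    | x :: v => (f x).label v⟩

end TreeAut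

variable {m : ℕ}

/-- The `n`-th layer stabiliser `St_G(n)` of a group `G` of tree automorphisms. -/
def layerStab (G : Subgroup (TreeAut m)) (n : ℕ) : Subgroup (TreeAut m) where
  carrier := {g | g ∈ G ∧ ∀ u : List (Fin m), u.length = n → g.apply u = u}
  one_mem' := ⟨G.one_mem, fun u _ => TreeAut.one_apply u⟩
  mul_mem' := by
    rintro a b ⟨haG, ha⟩ ⟨hbG, hb⟩
    refine ⟨G.mul_mem haG hbG, fun u hu => ?_⟩
    rw [TreeAut.mul_apply, hb u hu, ha u hu]
  inv_mem' := by
    rintro a ⟨haG, ha⟩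
    refine ⟨G.inv_mem haG, fun u hu => ?_⟩
    apply TreeAut.apply_injective a
    rw [← TreeAut.mul_apply, mul_inv_cancel, TreeAut.one_apply, ha u hu]

/-- A group of tree automorphisms acts spherically transitively if it acts
transitively on every layer. -/
def SphericallyTransitive (G : Subgroup (TreeAut m)) : Prop :=
  ∀ u v : List (Fin m), u.length = v.length → ∃ g ∈ G, g.apply u = v

/-- A group of tree automorphisms is self-similar if it is closed under sections. -/
def SelfSimilar (G : Subgroup (TreeAut m)) : Prop :=
  ∀ g ∈ G, ∀ v : List (Fin m), g.sec v ∈ G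

/-- A spherically transitive group is fractal if `st_G(u)|_u = G` for all vertices `u`. -/
def Fractal (G : Subgroup (TreeAut m)) : Prop :=
  SphericallyTransitive G ∧
    ∀ u : List (Fin m),
      {h : TreeAut m | ∃ g ∈ G, g.apply u = u ∧ g.sec u = h} = (G : Set (TreeAut m))

/-- A spherically transitive group is strongly fractal if `St_G(1)|_x = G` for all `x ∈ X`. -/
def StronglyFractal (G : Subgroup (TreeAut m)) : Prop :=
  SphericallyTransitive G ∧
    ∀ x : Fin m,
      {h : TreeAut m | ∃ g ∈ layerStab G 1, g.sec [x] = h} = (G : Set (TreeAut m))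

/-- A spherically transitive group is very strongly fractal if
`St_G(n+1)|_x = St_G(n)` for all `n` and `x ∈ X`. -/
def VeryStronglyFractal (G : Subgroup (TreeAut m)) : Prop :=
  SphericallyTransitive G ∧
    ∀ (n : ℕ) (x : Fin m),
      {h : TreeAut m | ∃ g ∈ layerStab G (n + 1), g.sec [x] = h}
        = (layerStab G n : Set (TreeAut m))

/-- A group of tree automorphisms is contracting if it has a finite nucleus. -/
def Contracting (G : Subgroup (TreeAut m)) : Prop :=
  ∃ N : Set (TreeAut m), N.Finite ∧ N ⊆ (G : Set (TreeAut m)) ∧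
    ∀ g ∈ G, ∃ k : ℕ, ∀ v : List (Fin m), k < v.length → g.sec v ∈ N

/-- A tree automorphism is finite-state if it has finitely many distinct sections. -/
def FiniteState (f : TreeAut m) : Prop :=
  {h : TreeAut m | ∃ u : List (Fin m), f.sec u = h}.Finite

/-- A tree automorphism is bounded if the number of nontrivial sections at the
`n`-th layer is bounded uniformly in `n`. -/
def BoundedAut (f : TreeAut m) : Prop :=
  ∃ C : ℕ, ∀ n : ℕ, {u : List (Fin m) | u.length = n ∧ f.sec u ≠ 1}.ncard ≤ C

/-- The `n`-th rigid layer stabiliser: the subgroup generated by the rigid vertex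
stabilisers of the vertices of the `n`-th layer. -/
def rigidLayerStab (G : Subgroup (TreeAut m)) (n : ℕ) : Subgroup (TreeAut m) :=
  Subgroup.closure {g | g ∈ G ∧ ∃ v : List (Fin m), v.length = n ∧
    ∀ u : List (Fin m), ¬ v <+: u → g.apply u = u}

/-- A weakly branch group: spherically transitive with nontrivial rigid layer stabilisers. -/
def WeaklyBranch (G : Subgroup (TreeAut m)) : Prop :=
  SphericallyTransitive G ∧ ∀ n : ℕ, rigidLayerStab G n ≠ ⊥

/-- `H` is weakly regular branch over `K ≤ H` if `ψ₁(St_K(1)) ⊇ K × ⋯ × K`. -/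
def WeaklyRegularBranchOver (H K : Subgroup (TreeAut m)) : Prop :=
  K ≤ H ∧ ∀ f : Fin m → TreeAut m, (∀ x, f x ∈ K) → TreeAut.cons 1 f ∈ K

/-- The portrait of the `i`-th Basilica monomorphism `β^s_i` applied to `g`,
computed by recursion over vertices. -/
def betaLabel [NeZero m] (s : ℕ) : List (Fin m) → ℕ → TreeAut m → Equiv.Perm (Fin m)
  | [], i, g => if i = 0 then g.label [] else 1
  | x :: u, i, g =>
      if i = 0 then betaLabel s u (s - 1) (g.sec [x])
      else if x = 0 then betaLabel s u (i - 1) g else 1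

/-- The Basilica monomorphism `β^s_i : Aut(T) → Aut(T)`, satisfying
`β_i(g) = ψ₁⁻¹(β_{i-1}(g), 1, …, 1)` for `1 ≤ i ≤ s-1` and
`β_0(g) = g|^ε · ψ₁⁻¹(β_{s-1}(g|_0), …, β_{s-1}(g|_{m-1}))`. -/
def betaAut [NeZero m] (s i : ℕ) (g : TreeAut m) : TreeAut m := ⟨fun u => betaLabel s u i g⟩

/-- The `s`-th Basilica group of `G`. -/
def basilica [NeZero m] (s : ℕ) (G : Subgroup (TreeAut m)) : Subgroup (TreeAut m) :=
  Subgroup.closure {b | ∃ g ∈ G, ∃ i < s, b = betaAut s i g}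

/-- The subgroup `S_i = ⟨β_j(G) : j ≠ i⟩` of the `s`-th Basilica group. -/
def Ssub [NeZero m] (s i : ℕ) (G : Subgroup (TreeAut m)) : Subgroup (TreeAut m) :=
  Subgroup.closure {b | ∃ g ∈ G, ∃ j < s, j ≠ i ∧ b = betaAut s j g}

/-- The normal closure `N_i` of `S_i` in the `s`-th Basilica group of `G`. -/
def Nsub [NeZero m] (s i : ℕ) (G : Subgroup (TreeAut m)) : Subgroup (TreeAut m) :=
  Subgroup.closure {x | ∃ b ∈ basilica s G, ∃ y ∈ Ssub s i G, x = b * y * b⁻¹}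

/-- The `i`-th splitting kernel `K_i = β_i⁻¹(β_i(G) ∩ N_i)` of `G`, as a set. -/
def Kset [NeZero m] (s i : ℕ) (G : Subgroup (TreeAut m)) : Set (TreeAut m) :=
  {g | g ∈ G ∧ betaAut s i g ∈ Nsub s i G}

/-- The portrait of the monomorphism `π_i` (for the `d`-fold diagonal construction). -/
def piLabel (d : ℕ) : List (Fin m) → ℕ → TreeAut m → Equiv.Perm (Fin m)
  | [], i, g => if i = 0 then g.label [] else 1
  | x :: u, i, g =>
      if i = 0 then piLabel d u (d - 1) (g.sec [x])
      else piLabel d u (i - 1) g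

/-- The monomorphism `π_i : Aut(T) → Aut(T)`, satisfying
`π_0(g) = g|^ε · ψ₁⁻¹(π_{d-1}(g|_0), …, π_{d-1}(g|_{m-1}))` and
`π_i(g) = ψ₁⁻¹(π_{i-1}(g), …, π_{i-1}(g))` for `1 ≤ i ≤ d-1`. -/
def piAut (d i : ℕ) (g : TreeAut m) : TreeAut m := ⟨fun u => piLabel d u i g⟩

/-- The generator of the `m`-adic odometer: `a = σ · ψ₁⁻¹(a, 1, …, 1)` with
`σ = (0 1 … m-1)`. -/
def odometer (m : ℕ) [NeZero m] : TreeAut m :=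
  ⟨fun u => if ∀ x ∈ u, x = 0 then finRotate m else 1⟩

/-- The group `O_m^d = D_d(O_m) = ⟨π_i(a) : 0 ≤ i ≤ d-1⟩`. -/
def OdPow (m d : ℕ) [NeZero m] : Subgroup (TreeAut m) :=
  Subgroup.closure {x | ∃ i < d, x = piAut d i (odometer m)}

/-- The group `Γ` of all automorphisms all of whose labels are powers of the
cycle `σ = (0 1 … m-1)`. -/
def Gamma (m : ℕ) : Subgroup (TreeAut m) where
  carrier := {g | ∀ u : List (Fin m), g.label u ∈ Subgroup.zpowers (finRotate m)}
  one_mem' := by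
    intro u
    rw [TreeAut.one_label]
    exact one_mem _
  mul_mem' := by
    intro a b ha hb u
    rw [TreeAut.mul_label]
    exact mul_mem (ha _) (hb _)
  inv_mem' := by
    intro a ha u
    rw [TreeAut.inv_label]
    exact inv_mem (ha _)

/-- The Hausdorff dimension of `G ≤ Γ` relative to `Γ`. -/
noncomputable def hdim (m : ℕ) (G : Subgroup (TreeAut m)) : ℝ :=
  Filter.liminf (fun n : ℕ =>
    Real.logb m ((layerStab G n).relIndex G) /
      Real.logb m ((layerStab (Gamma m) n).relIndex (Gamma m))) Filter.atTop

/-- The series of obstructions `o_G(n) = m·log_m|L_G(n-1)| - log_m|L_G(n)|` (for `n ≥ 1`),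
where `L_G(n) = St_G(n)/St_G(n+1)`. -/
noncomputable def obstruction (m : ℕ) (G : Subgroup (TreeAut m)) (n : ℕ) : ℝ :=
  m * Real.logb m ((layerStab G n).relIndex (layerStab G (n - 1)))
    - Real.logb m ((layerStab G (n + 1)).relIndex (layerStab G n))

/-- The permutation group induced by `G` on the first layer acts regularly on `X`. -/
def RegularRootAction (G : Subgroup (TreeAut m)) : Prop :=
  (∀ x y : Fin m, ∃ g ∈ G, g.label [] x = y) ∧
    ∀ g ∈ G, ∀ x : Fin m, g.label [] x = x → g.label [] = 1


section BetaCommute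

variable [NeZero m]

/-- `g` stabilises the ray `0̄`. -/
def Ray (g : TreeAut m) : Prop :=
  ∀ n : ℕ, g.apply (List.replicate n (0 : Fin m)) = List.replicate n (0 : Fin m)

lemma Ray.label_zero {g : TreeAut m} (hg : Ray g) : g.label [] 0 = 0 := by
  have h1 := hg 1
  simp only [List.replicate, TreeAut.apply_cons, TreeAut.apply_nil] at h1
  exact (List.cons.injEq _ _ _ _).mp h1 |>.1

lemma Ray.sec_zero {g : TreeAut m} (hg : Ray g) : Ray (g.sec [0]) := by
  intro n
  have h1 := hg (n + 1)
  rw [List.replicate_succ, TreeAut.apply_cons] at h1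
  exact ((List.cons.injEq _ _ _ _).mp h1).2

lemma Ray.label_ne_zero {g : TreeAut m} (hg : Ray g) {x : Fin m} (hx : x ≠ 0) :
    g.label [] x ≠ 0 := fun hc =>
  hx ((g.label []).injective (hc.trans hg.label_zero.symm))

lemma betaAut_label_nil (s i : ℕ) (g : TreeAut m) :
    (betaAut s i g).label [] = if i = 0 then g.label [] else 1 := rfl

lemma betaAut_apply_single (s i : ℕ) (g : TreeAut m) (x : Fin m) :
    (betaAut s i g).apply [x] = [(betaAut s i g).label [] x] := rfl

lemma betaAut_sec_zero_idx (s : ℕ) (g : TreeAut m) (x : Fin m) :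
    (betaAut s 0 g).sec [x] = betaAut s (s - 1) (g.sec [x]) :=
  TreeAut.ext_label fun u => by
    show betaLabel s (x :: u) 0 g = _
    simp [betaLabel, betaAut]

lemma betaAut_sec_pos_zero (s i : ℕ) (hi : i ≠ 0) (g : TreeAut m) :
    (betaAut s i g).sec [(0 : Fin m)] = betaAut s (i - 1) g :=
  TreeAut.ext_label fun u => by
    show betaLabel s ((0 : Fin m) :: u) i g = _
    simp [betaLabel, betaAut, hi]

lemma betaAut_sec_pos_ne (s i : ℕ) (hi : i ≠ 0) {x : Fin m} (hx : x ≠ 0) (g : TreeAut m) :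
    (betaAut s i g).sec [x] = 1 :=
  TreeAut.ext_label fun u => by
    show betaLabel s (x :: u) i g = _
    simp [betaLabel, hi, hx]

lemma beta_key_label (s : ℕ) (u : List (Fin m)) :
    ∀ (i j : ℕ) (g h : TreeAut m), i < s → j < s → i ≠ j → Ray g → Ray h →
      (betaAut s i g * betaAut s j h).label u
        = (betaAut s j h * betaAut s i g).label u := by
  induction u with
  | nil =>
      intro i j g h hi hj hij hg hh
      simp only [TreeAut.mul_label, TreeAut.apply_nil, betaAut_label_nil]
      rcases Nat.eq_zero_or_pos i with hi0 | hi0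
      · have hj0 : j ≠ 0 := by omega
        simp [hi0, hj0]
      · have hi0' : i ≠ 0 := by omega
        simp [hi0']
  | cons x u ih =>
      intro i j g h hi hj hij hg hh
      have hs0 : s - 1 < s := by omega
      show ((betaAut s i g * betaAut s j h).sec [x]).label u
          = ((betaAut s j h * betaAut s i g).sec [x]).label u
      rw [TreeAut.mul_sec, TreeAut.mul_sec, betaAut_apply_single, betaAut_apply_single,
        betaAut_label_nil, betaAut_label_nil]
      rcases Nat.eq_zero_or_pos i with hi0 | hipos
      · -- i = 0, j ≠ 0
        subst hi0
        have hj0 : j ≠ 0 := fun hc => hij hc.symm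
        simp only [if_pos rfl, if_true, if_neg hj0, Equiv.Perm.one_apply]
        rcases eq_or_ne x 0 with rfl | hx
        · rw [hg.label_zero, betaAut_sec_zero_idx, betaAut_sec_pos_zero s j hj0]
          exact ih (s - 1) (j - 1) (g.sec [0]) h hs0 (by omega) (by omega)
            hg.sec_zero hh
        · rw [betaAut_sec_pos_ne s j hj0 hx, betaAut_sec_pos_ne s j hj0 (hg.label_ne_zero hx),
            mul_one, one_mul]
      · have hi0 : i ≠ 0 := by omega
        rcases Nat.eq_zero_or_pos j with hj0 | hjpos
        · -- j = 0, i ≠ 0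
          subst hj0
          simp only [if_pos rfl, if_true, if_neg hi0, Equiv.Perm.one_apply]
          rcases eq_or_ne x 0 with rfl | hx
          · rw [hh.label_zero, betaAut_sec_zero_idx, betaAut_sec_pos_zero s i hi0]
            exact ih (i - 1) (s - 1) g (h.sec [0]) (by omega) hs0 (by omega)
              hg hh.sec_zero
          · rw [betaAut_sec_pos_ne s i hi0 hx, betaAut_sec_pos_ne s i hi0 (hh.label_ne_zero hx),
              mul_one, one_mul]
        · -- i ≠ 0, j ≠ 0
          have hj0 : j ≠ 0 := by omega
          simp only [if_neg hi0, if_neg hj0, Equiv.Perm.one_apply]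
          rcases eq_or_ne x 0 with rfl | hx
          · rw [betaAut_sec_pos_zero s i hi0, betaAut_sec_pos_zero s j hj0]
            exact ih (i - 1) (j - 1) g h (by omega) (by omega) (by omega) hg hh
          · rw [betaAut_sec_pos_ne s i hi0 hx, betaAut_sec_pos_ne s j hj0 hx]

end BetaCommute

/-- For `s ≥ 1`, `i ≠ j ∈ {0, …, s-1}`, and `g, h` in the stabiliser of
the infinite ray `0̄ = {0^n : n ∈ ℕ}`, the elements `β_i(g)` and `β_j(h)` commute, i.e.
`[β_i(st(0̄)), β_j(st(0̄))] = 1`. -/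
theorem beta_rayStabiliser_commute {m : ℕ} [NeZero m] (hm : 2 ≤ m)
    (s : ℕ) (hs : 1 ≤ s) (i j : ℕ) (hi : i < s) (hj : j < s) (hij : i ≠ j)
    (g h : TreeAut m)
    (hg : ∀ n : ℕ, g.apply (List.replicate n (0 : Fin m)) = List.replicate n (0 : Fin m))
    (hh : ∀ n : ℕ, h.apply (List.replicate n (0 : Fin m)) = List.replicate n (0 : Fin m)) :
    Commute (betaAut s i g) (betaAut s j h) :=
  TreeAut.ext_label fun u => beta_key_label s u i j g h hi hj hij hg hh

end Basilica
end

section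
/- Let G ≤ Γ act spherically transitively on T. Then the Hausdorff dimension of G relative to Γ is given by dim_H G = 1 − limsup_{n→∞} Σ_{i=1}^{n} (m^{−i} − m^{−(n+1)})·o_G(i), where (o_G(i))_{i≥1} is the series of obstructions of G. -/
/-!
Groups of automorphisms of the `m`-regular rooted tree, encoded via portraits:
an automorphism is determined by the family of its labels (local actions)
`label : List (Fin m) → Equiv.Perm (Fin m)`.
-/

namespace Basilica

variable {m : ℕ}

section Aux

namespace TreeAut

lemma apply_eq_of_label_eq {m : ℕ} :
    ∀ (u : List (Fin m)) (g h : TreeAut m) (n : ℕ),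
      (∀ v : List (Fin m), v.length < n → g.label v = h.label v) →
      u.length ≤ n → g.apply u = h.apply u := by
  intro u
  induction u with
  | nil => intro g h n _ _; rfl
  | cons x u ih =>
      intro g h n hl hu
      simp only [List.length_cons] at hu
      rw [TreeAut.apply_cons, TreeAut.apply_cons, hl [] (by simp only [List.length_nil]; omega)]
      congr 1
      refine ih _ _ (n - 1) (fun v hv => ?_) (by omega)
      simp only [sec_label, List.singleton_append]
      exact hl (x :: v) (by simp only [List.length_cons]; omega)

lemma apply_eq_self_of_label_eq_one {m : ℕ} (g : TreeAut m) (n : ℕ)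
    (h : ∀ v : List (Fin m), v.length < n → g.label v = 1)
    (u : List (Fin m)) (hu : u.length ≤ n) : g.apply u = u := by
  have := apply_eq_of_label_eq u g 1 n (fun v hv => by rw [h v hv, one_label]) hu
  simpa using this

lemma label_eq_one_of_fix {m : ℕ} [NeZero m] (g : TreeAut m) (n : ℕ)
    (hfix : ∀ u : List (Fin m), u.length = n → g.apply u = u) :
    ∀ v : List (Fin m), v.length < n → g.label v = 1 := by
  have hle : ∀ u : List (Fin m), u.length ≤ n → g.apply u = u := by
    intro u hu
    have h0 : (u ++ List.replicate (n - u.length) (0 : Fin m)).length = n := by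
      simp only [List.length_append, List.length_replicate]; omega
    have h1 := hfix _ h0
    rw [TreeAut.apply_append] at h1
    exact (List.append_inj h1 (by simp)).1
  intro v hv
  ext x
  have h1 := hle (v ++ [x]) (by simp only [List.length_append, List.length_singleton]; omega)
  rw [TreeAut.apply_append, hle v (by omega)] at h1
  have h2 := (List.append_inj h1 rfl).2
  rw [TreeAut.apply_cons] at h2
  simp only [apply_nil, sec_label, List.append_nil, List.cons.injEq, and_true] at h2
  rw [h2]; rfl

end TreeAut

lemma mem_layerStab {m : ℕ} {G : Subgroup (TreeAut m)} {n : ℕ} {g : TreeAut m} :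
    g ∈ layerStab G n ↔ g ∈ G ∧ ∀ u : List (Fin m), u.length = n → g.apply u = u :=
  Iff.rfl

lemma mem_layerStab_iff {m : ℕ} [NeZero m] {G : Subgroup (TreeAut m)} {n : ℕ} {g : TreeAut m} :
    g ∈ layerStab G n ↔ g ∈ G ∧ ∀ v : List (Fin m), v.length < n → g.label v = 1 := by
  rw [mem_layerStab]
  constructor
  · rintro ⟨hg, hfix⟩
    exact ⟨hg, TreeAut.label_eq_one_of_fix g n hfix⟩
  · rintro ⟨hg, hl⟩
    exact ⟨hg, fun u hu => TreeAut.apply_eq_self_of_label_eq_one g n hl u hu.le⟩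

lemma layerStab_zero {m : ℕ} (G : Subgroup (TreeAut m)) : layerStab G 0 = G := by
  ext g
  rw [mem_layerStab]
  refine ⟨fun h => h.1, fun h => ⟨h, fun u hu => ?_⟩⟩
  rw [List.length_eq_zero_iff] at hu
  subst hu
  rfl

lemma layerStab_succ_le {m : ℕ} [NeZero m] (G : Subgroup (TreeAut m)) (n : ℕ) :
    layerStab G (n + 1) ≤ layerStab G n := by
  intro g hg
  rw [mem_layerStab_iff] at hg ⊢
  exact ⟨hg.1, fun v hv => hg.2 v (by omega)⟩

lemma layerStab_le {m : ℕ} (G : Subgroup (TreeAut m)) (n : ℕ) : layerStab G n ≤ G :=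
  fun _ hg => hg.1

lemma layerStab_eq_inf {m : ℕ} (G : Subgroup (TreeAut m)) (n : ℕ) :
    layerStab G n = layerStab ⊤ n ⊓ G := by
  ext g
  rw [Subgroup.mem_inf, mem_layerStab, mem_layerStab]
  tauto

end Aux
section Rot

open Fin.CommRing

lemma finRotate_pow_apply (n k : ℕ) (x : Fin (n + 1)) :
    (finRotate (n + 1) ^ k) x = x + (k : Fin (n + 1)) := by
  induction k generalizing x with
  | zero => simp
  | succ k ih =>
      rw [pow_succ, Equiv.Perm.mul_apply, finRotate_succ_apply, ih]
      push_cast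
      ring

lemma finRotate_inv_apply (n : ℕ) (x : Fin (n + 1)) :
    (finRotate (n + 1))⁻¹ x = x - 1 := by
  apply (finRotate (n + 1)).injective
  rw [← Equiv.Perm.mul_apply, mul_inv_cancel, Equiv.Perm.one_apply, finRotate_succ_apply]
  ring

lemma finRotate_zpow_apply (n : ℕ) (z : ℤ) (x : Fin (n + 1)) :
    (finRotate (n + 1) ^ z) x = x + (z : Fin (n + 1)) := by
  induction z using Int.induction_on generalizing x with
  | zero => simp
  | succ k ih =>
      rw [zpow_add_one, Equiv.Perm.mul_apply, finRotate_succ_apply, ih]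
      push_cast
      ring
  | pred k ih =>
      rw [zpow_sub_one, Equiv.Perm.mul_apply, finRotate_inv_apply, ih]
      push_cast
      ring

lemma zpowers_finRotate_eq_one {n : ℕ} {h : Equiv.Perm (Fin (n + 1))}
    (hh : h ∈ Subgroup.zpowers (finRotate (n + 1))) {x : Fin (n + 1)} (hx : h x = x) :
    h = 1 := by
  obtain ⟨z, rfl⟩ := Subgroup.mem_zpowers_iff.mp hh
  rw [finRotate_zpow_apply] at hx
  have hz : (z : Fin (n + 1)) = 0 := by
    have := add_eq_left.mp hx
    exact this
  ext y
  rw [finRotate_zpow_apply, hz, add_zero, Equiv.Perm.one_apply]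

lemma card_zpowers_finRotate (n : ℕ) :
    Nat.card (Subgroup.zpowers (finRotate (n + 1))) = n + 1 := by
  have hb : Function.Bijective (fun x : Fin (n + 1) =>
      (⟨finRotate (n + 1) ^ (x : ℕ),
        Subgroup.mem_zpowers_iff.mpr ⟨((x : ℕ) : ℤ), by rw [zpow_natCast]⟩⟩ :
        Subgroup.zpowers (finRotate (n + 1)))) := by
    constructor
    · intro a b hab
      have hab2 : (finRotate (n + 1) ^ (a : ℕ)) = (finRotate (n + 1) ^ (b : ℕ)) := by
        simpa [Subtype.ext_iff] using hab
      have h1 : (finRotate (n + 1) ^ (a : ℕ)) 0 = (finRotate (n + 1) ^ (b : ℕ)) 0 :=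
        DFunLike.congr_fun hab2 0
      rw [finRotate_pow_apply, finRotate_pow_apply, zero_add, zero_add,
        Fin.cast_val_eq_self, Fin.cast_val_eq_self] at h1
      exact h1
    · rintro ⟨h, hh⟩
      obtain ⟨z, rfl⟩ := Subgroup.mem_zpowers_iff.mp hh
      refine ⟨(z : Fin (n + 1)), ?_⟩
      apply Subtype.ext
      ext y
      rw [finRotate_pow_apply, finRotate_zpow_apply, Fin.cast_val_eq_self]
  rw [← Nat.card_eq_of_bijective _ hb, Nat.card_eq_fintype_card, Fintype.card_fin]

end Rot
section St1

/-- The root-label homomorphism. -/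
def labelHom (m : ℕ) : TreeAut m →* Equiv.Perm (Fin m) where
  toFun g := g.label []
  map_one' := rfl
  map_mul' a b := by
    show (a * b).label [] = a.label [] * b.label []
    rw [TreeAut.mul_label, TreeAut.apply_nil]

lemma layerStab_one_eq {m : ℕ} [NeZero m] (G : Subgroup (TreeAut m)) :
    layerStab G 1 = (labelHom m).ker ⊓ G := by
  ext g
  rw [mem_layerStab_iff, Subgroup.mem_inf, MonoidHom.mem_ker]
  constructor
  · rintro ⟨hg, hl⟩
    exact ⟨hl [] (by simp), hg⟩
  · rintro ⟨hk, hg⟩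
    refine ⟨hg, fun v hv => ?_⟩
    have hv0 : v = [] := List.length_eq_zero_iff.mp (by omega)
    subst hv0
    exact hk

lemma relindex_layerStab_one {m : ℕ} (hm : 2 ≤ m) (G : Subgroup (TreeAut m))
    (hG : G ≤ Gamma m) (htrans : SphericallyTransitive G) :
    (layerStab G 1).relIndex G = m := by
  have hnz : NeZero m := ⟨by omega⟩
  obtain ⟨n, rfl⟩ : ∃ n, m = n + 1 := ⟨m - 1, by omega⟩
  have hmap : G.map (labelHom (n + 1)) = Subgroup.zpowers (finRotate (n + 1)) := by
    apply le_antisymm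
    · rintro p ⟨g, hg, rfl⟩
      exact hG hg []
    · rw [Subgroup.zpowers_le]
      obtain ⟨g, hg, hga⟩ := htrans [0] [1] rfl
      have h0 : g.label [] 0 = 1 := by
        rw [TreeAut.apply_cons] at hga
        exact (List.cons.injEq _ _ _ _ ▸ hga).1
      have hz := hG hg []
      have hfix : ((finRotate (n + 1))⁻¹ * g.label []) 0 = 0 := by
        rw [Equiv.Perm.mul_apply, h0, finRotate_inv_apply, sub_self]
      have h1 : (finRotate (n + 1))⁻¹ * g.label [] = 1 :=
        zpowers_finRotate_eq_one
          (mul_mem (inv_mem (Subgroup.mem_zpowers _)) hz) hfix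
      exact ⟨g, hg, (inv_mul_eq_one.mp h1).symm⟩
  rw [layerStab_one_eq, Subgroup.inf_relIndex_right, Subgroup.relIndex_ker, hmap,
    card_zpowers_finRotate]

end St1
section GammaIndex

/-- Words of fixed length `k` are equivalent to tuples. -/
def wordEquiv (m k : ℕ) : {u : List (Fin m) // u.length = k} ≃ (Fin k → Fin m) where
  toFun u i := u.1.get (Fin.cast u.2.symm i)
  invFun f := ⟨List.ofFn f, List.length_ofFn⟩
  left_inv := by
    rintro ⟨l, rfl⟩
    exact Subtype.ext (List.ofFn_get l)
  right_inv f := funext fun i => by simp [List.get_ofFn]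

instance wordFintype (m k : ℕ) : Fintype {u : List (Fin m) // u.length = k} :=
  Fintype.ofEquiv _ (wordEquiv m k).symm

lemma card_words (m k : ℕ) : Nat.card {u : List (Fin m) // u.length = k} = m ^ k := by
  rw [Nat.card_congr (wordEquiv m k), Nat.card_fun, Nat.card_eq_fintype_card,
    Nat.card_eq_fintype_card, Fintype.card_fin, Fintype.card_fin]

/-- Words of length `< n` as a sigma type. -/
def shortWordsEquiv (m n : ℕ) :
    {u : List (Fin m) // u.length < n} ≃ Σ k : Fin n, {u : List (Fin m) // u.length = (k : ℕ)} where
  toFun u := ⟨⟨u.1.length, u.2⟩, ⟨u.1, rfl⟩⟩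
  invFun v := ⟨v.2.1, by rw [v.2.2]; exact v.1.2⟩
  left_inv u := rfl
  right_inv := by
    rintro ⟨⟨k, hk⟩, ⟨l, hl⟩⟩
    have hl' : l.length = k := hl
    subst hl'
    rfl

instance shortWordsFintype (m n : ℕ) : Fintype {u : List (Fin m) // u.length < n} :=
  Fintype.ofEquiv _ (shortWordsEquiv m n).symm

lemma card_shortWords (m n : ℕ) :
    Nat.card {u : List (Fin m) // u.length < n} = ∑ k ∈ Finset.range n, m ^ k := by
  rw [Nat.card_congr (shortWordsEquiv m n), Nat.card_eq_fintype_card, Fintype.card_sigma,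
    ← Fin.sum_univ_eq_sum_range (fun k => m ^ k) n]
  congr 1
  funext k
  rw [← Nat.card_eq_fintype_card, card_words]

lemma relindex_layerStab_gamma {m : ℕ} (hm : 2 ≤ m) (n : ℕ) :
    (layerStab (Gamma m) n).relIndex (Gamma m) = m ^ (∑ k ∈ Finset.range n, m ^ k) := by
  have hnz : NeZero m := ⟨by omega⟩
  set H := (layerStab (Gamma m) n).subgroupOf (Gamma m) with hH
  let W := ({u : List (Fin m) // u.length < n} → Subgroup.zpowers (finRotate m))
  let F : (Gamma m) → W := fun g u => ⟨(g : TreeAut m).label u.1, g.2 u.1⟩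
  have hcompat : ∀ a b : Gamma m, @Setoid.r _ (QuotientGroup.leftRel H) a b → F a = F b := by
    intro a b hab
    have hab' : (a : TreeAut m)⁻¹ * (b : TreeAut m) ∈ layerStab (Gamma m) n := by
      have := QuotientGroup.leftRel_apply.mp hab
      rw [hH, Subgroup.mem_subgroupOf] at this
      simpa using this
    have hlab := (mem_layerStab_iff.mp hab').2
    have hb : (b : TreeAut m) = (a : TreeAut m) * ((a : TreeAut m)⁻¹ * (b : TreeAut m)) := by
      group
    funext u
    apply Subtype.ext
    show (a : TreeAut m).label u.1 = (b : TreeAut m).label u.1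
    rw [hb, TreeAut.mul_label,
      TreeAut.apply_eq_self_of_label_eq_one _ n hlab u.1 u.2.le, hlab u.1 u.2, mul_one]
  let φ : ((Gamma m) ⧸ H) → W := fun q => Quotient.liftOn' q F hcompat
  have hinj : Function.Injective φ := by
    intro q1 q2
    refine Quotient.inductionOn₂' q1 q2 ?_
    intro a b hab
    apply Quotient.sound'
    rw [QuotientGroup.leftRel_apply, hH, Subgroup.mem_subgroupOf]
    have hlabs : ∀ v : List (Fin m), v.length < n →
        (b : TreeAut m).label v = (a : TreeAut m).label v := by
      intro v hv
      have := congrFun hab ⟨v, hv⟩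
      exact (Subtype.ext_iff.mp this).symm
    have : ((a⁻¹ * b : Gamma m) : TreeAut m) = (a : TreeAut m)⁻¹ * (b : TreeAut m) := by
      simp
    rw [mem_layerStab]
    constructor
    · exact (a⁻¹ * b : Gamma m).2
    · intro u hu
      rw [this, TreeAut.mul_apply,
        TreeAut.apply_eq_of_label_eq u (b : TreeAut m) (a : TreeAut m) n hlabs hu.le,
        ← TreeAut.mul_apply, inv_mul_cancel, TreeAut.one_apply]
  have hsurj : Function.Surjective φ := by
    intro w
    have hmem : (⟨fun u => if h : u.length < n then (w ⟨u, h⟩ : Equiv.Perm (Fin m)) else 1⟩ :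
        TreeAut m) ∈ Gamma m := by
      intro u
      show (if h : u.length < n then (w ⟨u, h⟩ : Equiv.Perm (Fin m)) else 1) ∈ _
      split
      · exact (w _).2
      · exact one_mem _
    refine ⟨Quotient.mk'' ⟨_, hmem⟩, ?_⟩
    show F _ = w
    funext u
    apply Subtype.ext
    show (if h : u.1.length < n then (w ⟨u.1, h⟩ : Equiv.Perm (Fin m)) else 1) = _
    rw [dif_pos u.2]
  have hcard : (layerStab (Gamma m) n).relIndex (Gamma m) = Nat.card W := by
    rw [Subgroup.relIndex, Subgroup.index, ← hH]
    exact Nat.card_eq_of_bijective φ ⟨hinj, hsurj⟩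
  rw [hcard]
  obtain ⟨n', rfl⟩ : ∃ n', m = n' + 1 := ⟨m - 1, by omega⟩
  rw [Nat.card_fun, card_zpowers_finRotate, card_shortWords]

end GammaIndex
section Gfacts

lemma relindex_layerStab_gamma_ne_zero {m : ℕ} (hm : 2 ≤ m) (n : ℕ) :
    (layerStab ⊤ n).relIndex (Gamma m) ≠ 0 := by
  rw [← Subgroup.inf_relIndex_right, ← layerStab_eq_inf, relindex_layerStab_gamma hm n]
  exact pow_ne_zero _ (by omega)

lemma relindex_layerStab_ne_zero {m : ℕ} (hm : 2 ≤ m) (G : Subgroup (TreeAut m))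
    (hG : G ≤ Gamma m) (n : ℕ) : (layerStab G n).relIndex G ≠ 0 := by
  rw [layerStab_eq_inf, Subgroup.inf_relIndex_right]
  intro h0
  exact relindex_layerStab_gamma_ne_zero hm n
    (Subgroup.relIndex_eq_zero_of_le_right hG h0)

lemma relindex_layerStab_le {m : ℕ} (hm : 2 ≤ m) (G : Subgroup (TreeAut m))
    (hG : G ≤ Gamma m) (n : ℕ) :
    (layerStab G n).relIndex G ≤ m ^ (∑ k ∈ Finset.range n, m ^ k) := by
  rw [layerStab_eq_inf, Subgroup.inf_relIndex_right]
  have h2 := Subgroup.relIndex_le_of_le_right hG (relindex_layerStab_gamma_ne_zero hm n)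
  rwa [← Subgroup.inf_relIndex_right (layerStab ⊤ n) (Gamma m), ← layerStab_eq_inf,
    relindex_layerStab_gamma hm n] at h2

lemma relindex_layerStab_succ {m : ℕ} (G : Subgroup (TreeAut m)) (n : ℕ) :
    (layerStab G (n + 1)).relIndex G
      = (layerStab G (n + 1)).relIndex (layerStab G n) * (layerStab G n).relIndex G := by
  rcases Nat.eq_zero_or_pos m with rfl | hpos
  · have h : layerStab G (n + 1) = layerStab G n := by
      ext g
      rw [mem_layerStab, mem_layerStab]
      have : ∀ k, ∀ u : List (Fin 0), u.length = k → g.apply u = u := by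
        intro k u _
        have : u = [] := by
          cases u with
          | nil => rfl
          | cons x _ => exact absurd x.2 (by omega)
        subst this; rfl
      constructor
      · rintro ⟨h1, _⟩; exact ⟨h1, this n⟩
      · rintro ⟨h1, _⟩; exact ⟨h1, this (n + 1)⟩
    rw [h, Subgroup.relIndex_self, one_mul]
  · have : NeZero m := ⟨by omega⟩
    exact (Subgroup.relIndex_mul_relIndex _ _ _
      (layerStab_succ_le G n) (layerStab_le G n)).symm

end Gfacts

section RealAux

lemma real_le_of_forall_pos_le_add {a b : ℝ} (h : ∀ ε : ℝ, 0 < ε → a ≤ b + ε) : a ≤ b := by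
  by_contra hc
  push_neg at hc
  have := h ((a - b) / 2) (by linarith)
  linarith

lemma sum_Icc_one_eq_sum_range (f : ℕ → ℝ) (n : ℕ) :
    ∑ i ∈ Finset.Icc 1 n, f i = ∑ j ∈ Finset.range n, f (j + 1) := by
  induction n with
  | zero => simp
  | succ n ih =>
      rw [Finset.sum_Icc_succ_top (by omega), ih, Finset.sum_range_succ]

end RealAux
/-- Let `G ≤ Γ` act spherically transitively on `T`. Then
`dim_H G = 1 - limsup_{n→∞} ∑_{i=1}^n (m^{-i} - m^{-(n+1)}) o_G(i)`. -/
theorem hdim_eq_one_sub_limsup_obstruction {m : ℕ} (hm : 2 ≤ m)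
    (G : Subgroup (TreeAut m)) (hG : G ≤ Gamma m)
    (htrans : SphericallyTransitive G) :
    hdim m G = 1 - Filter.limsup (fun n : ℕ =>
      ∑ i ∈ Finset.Icc 1 n,
        ((m : ℝ) ^ (-(i : ℤ)) - (m : ℝ) ^ (-((n : ℤ) + 1))) * obstruction m G i)
      Filter.atTop := by
  have hnz : NeZero m := ⟨by omega⟩
  have hm2 : (2 : ℝ) ≤ (m : ℝ) := by exact_mod_cast hm
  have hm1 : (1 : ℝ) < (m : ℝ) := by linarith
  have hm0 : (0 : ℝ) < (m : ℝ) := by linarith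
  set c : ℕ → ℕ := fun k => ∑ i ∈ Finset.range k, m ^ i with hc
  set N : ℕ → ℕ := fun k => (layerStab G k).relIndex G with hNdef
  set L : ℕ → ℕ := fun k => (layerStab G (k + 1)).relIndex (layerStab G k) with hLdef
  set A : ℕ → ℝ := fun k => Real.logb m (N k) with hAdef
  set l : ℕ → ℝ := fun k => Real.logb m (L k) with hldef
  set r : ℝ := ((m : ℝ))⁻¹ with hr
  set B : ℕ → ℝ := fun n => r ^ (n + 1) * (1 + ((m : ℝ) - 1) * A (n + 1)) with hBdef
  set t : ℕ → ℝ := fun k => A k / (c k : ℝ) with htdef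
  -- basic arithmetic facts
  have hNne : ∀ k, N k ≠ 0 := fun k => relindex_layerStab_ne_zero hm G hG k
  have hNle : ∀ k, N k ≤ m ^ c k := fun k => relindex_layerStab_le hm G hG k
  have hNsucc : ∀ k, N (k + 1) = L k * N k := fun k => relindex_layerStab_succ G k
  have hLne : ∀ k, L k ≠ 0 := by
    intro k h
    have h2 := hNne (k + 1)
    rw [hNsucc k, h, zero_mul] at h2
    exact h2 rfl
  have hN0 : N 0 = 1 := by
    show (layerStab G 0).relIndex G = 1
    rw [layerStab_zero, Subgroup.relIndex_self]
  have hL0 : L 0 = m := by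
    show (layerStab G (0 + 1)).relIndex (layerStab G 0) = m
    rw [layerStab_zero]
    exact relindex_layerStab_one hm G hG htrans
  have hA0 : A 0 = 0 := by
    show Real.logb m (N 0) = 0
    rw [hN0]
    simp
  have hl0 : l 0 = 1 := by
    show Real.logb m (L 0) = 1
    rw [hL0]
    exact Real.logb_self_eq_one hm1
  have hApos : ∀ k, 0 ≤ A k := fun k =>
    Real.logb_nonneg hm1 (by exact_mod_cast Nat.one_le_iff_ne_zero.mpr (hNne k))
  have hAsucc : ∀ k, A (k + 1) = l k + A k := by
    intro k
    show Real.logb m (N (k + 1)) = Real.logb m (L k) + Real.logb m (N k)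
    rw [hNsucc k]
    push_cast
    exact Real.logb_mul (by exact_mod_cast hLne k) (by exact_mod_cast hNne k)
  have hleq : ∀ k, l k = A (k + 1) - A k := fun k => by rw [hAsucc k]; ring
  have hAle : ∀ k, A k ≤ (c k : ℝ) := by
    intro k
    have h1 : ((N k : ℕ) : ℝ) ≤ ((m ^ c k : ℕ) : ℝ) := by exact_mod_cast hNle k
    have h0 : (0 : ℝ) < ((N k : ℕ) : ℝ) := by
      exact_mod_cast Nat.pos_of_ne_zero (hNne k)
    have h2 := Real.logb_le_logb_of_le hm1 h0 h1
    calc A k ≤ Real.logb m (((m ^ c k : ℕ) : ℝ)) := h2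
      _ = (c k : ℝ) := by
          push_cast
          rw [Real.logb_pow, Real.logb_self_eq_one hm1, mul_one]
  -- obstruction evaluation
  have hobs : ∀ j : ℕ, obstruction m G (j + 1) = (m : ℝ) * l j - l (j + 1) := by
    intro j
    simp only [obstruction, Nat.add_sub_cancel]
    rfl
  -- power facts
  have hrpow : ∀ k : ℕ, (m : ℝ) ^ (-(k : ℤ)) = r ^ k := by
    intro k
    rw [zpow_neg, zpow_natCast, hr, inv_pow]
  have hrpow1 : ∀ n : ℕ, (m : ℝ) ^ (-((n : ℤ) + 1)) = r ^ (n + 1) := by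
    intro n
    have h : (-((n : ℤ) + 1)) = -(((n + 1 : ℕ) : ℤ)) := by push_cast; ring
    rw [h, hrpow]
  have hrm : ∀ k : ℕ, r ^ (k + 1) * (m : ℝ) = r ^ k := by
    intro k
    rw [pow_succ, mul_assoc, hr, inv_mul_cancel₀ (ne_of_gt hm0), mul_one]
  have hPk : ∀ k : ℕ, r ^ k = (((m : ℝ) ^ k))⁻¹ := fun k => by rw [hr, inv_pow]
  have hPpos : ∀ k : ℕ, (0 : ℝ) < (m : ℝ) ^ k := fun k => by positivity
  have hgeom : ∀ k : ℕ, ((m : ℝ) - 1) * (c k : ℝ) = (m : ℝ) ^ k - 1 := by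
    intro k
    have hcast : ((c k : ℕ) : ℝ) = ∑ i ∈ Finset.range k, (m : ℝ) ^ i := by
      rw [hc]
      push_cast
      rfl
    rw [hcast, mul_comm]
    exact geom_sum_mul _ k
  have hcpos : ∀ k : ℕ, (0 : ℝ) < ((c (k + 1) : ℕ) : ℝ) := by
    intro k
    have h1 : 1 ≤ c (k + 1) := by
      calc 1 = m ^ 0 := (pow_zero m).symm
        _ ≤ ∑ i ∈ Finset.range (k + 1), m ^ i :=
            Finset.single_le_sum (fun i _ => Nat.zero_le (m ^ i))
              (Finset.mem_range.mpr (Nat.succ_pos k))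
        _ = c (k + 1) := by rw [hc]
    exact_mod_cast h1
  -- telescoping sums
  have hT1 : ∀ n, ∑ j ∈ Finset.range n, r ^ (j + 1) * obstruction m G (j + 1)
      = l 0 - r ^ n * l n := by
    intro n
    induction n with
    | zero => simp
    | succ n ih =>
        rw [Finset.sum_range_succ, ih, hobs n]
        rw [← hrm n]
        ring
  have hT2 : ∀ n, ∑ j ∈ Finset.range n, obstruction m G (j + 1)
      = (m : ℝ) * A n - A (n + 1) + 1 := by
    intro n
    induction n with
    | zero =>
        rw [Finset.sum_range_zero, hA0, hAsucc 0, hl0, hA0]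
        ring
    | succ n ih =>
        rw [Finset.sum_range_succ, ih, hobs n, hleq n, hleq (n + 1)]
        ring
  have hS : ∀ n : ℕ, (∑ i ∈ Finset.Icc 1 n,
      ((m : ℝ) ^ (-(i : ℤ)) - (m : ℝ) ^ (-((n : ℤ) + 1))) * obstruction m G i)
      = 1 - B n := by
    intro n
    rw [sum_Icc_one_eq_sum_range
      (fun i => ((m : ℝ) ^ (-(i : ℤ)) - (m : ℝ) ^ (-((n : ℤ) + 1))) * obstruction m G i) n]
    have hcongr : ∀ j ∈ Finset.range n,
        ((m : ℝ) ^ (-((j + 1 : ℕ) : ℤ)) - (m : ℝ) ^ (-((n : ℤ) + 1))) * obstruction m G (j + 1)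
          = (r ^ (j + 1) - r ^ (n + 1)) * obstruction m G (j + 1) := by
      intro j _
      rw [hrpow (j + 1), hrpow1 n]
    rw [Finset.sum_congr rfl hcongr]
    simp only [sub_mul]
    rw [Finset.sum_sub_distrib, hT1 n, ← Finset.mul_sum, hT2 n, hl0, hleq n]
    simp only [hBdef]
    rw [← hrm n]
    ring
  -- bounds
  have hBlb : ∀ n, 0 ≤ B n := by
    intro n
    have h1 := hApos (n + 1)
    have h2 : (0 : ℝ) ≤ r ^ (n + 1) := by positivity
    have h3 : (0 : ℝ) ≤ 1 + ((m : ℝ) - 1) * A (n + 1) := by nlinarith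
    exact mul_nonneg h2 h3
  have hBub : ∀ n, B n ≤ 1 := by
    intro n
    have h3 : ((m : ℝ) - 1) * A (n + 1) ≤ ((m : ℝ) - 1) * (c (n + 1) : ℝ) :=
      mul_le_mul_of_nonneg_left (hAle (n + 1)) (by linarith)
    rw [hgeom (n + 1)] at h3
    have h2 : 1 + ((m : ℝ) - 1) * A (n + 1) ≤ (m : ℝ) ^ (n + 1) := by linarith
    calc B n ≤ r ^ (n + 1) * (m : ℝ) ^ (n + 1) := by
          exact mul_le_mul_of_nonneg_left h2 (by positivity)
      _ = 1 := by rw [hPk (n + 1)]; exact inv_mul_cancel₀ (ne_of_gt (hPpos (n + 1)))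
  have htlb : ∀ n, 0 ≤ t n := by
    intro n
    exact div_nonneg (hApos n) (Nat.cast_nonneg _)
  have htub : ∀ n, t n ≤ 1 := by
    intro n
    rcases n with _ | k
    · show A 0 / ((c 0 : ℕ) : ℝ) ≤ 1
      rw [hA0, zero_div]
      norm_num
    · show A (k + 1) / ((c (k + 1) : ℕ) : ℝ) ≤ 1
      rw [div_le_one (hcpos k)]
      exact hAle (k + 1)
  -- key comparison inequalities
  have hlow : ∀ n, t (n + 1) ≤ B n := by
    intro n
    show A (n + 1) / ((c (n + 1) : ℕ) : ℝ) ≤ r ^ (n + 1) * (1 + ((m : ℝ) - 1) * A (n + 1))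
    rw [hPk (n + 1), ← div_eq_inv_mul, div_le_div_iff₀ (hcpos n) (hPpos (n + 1))]
    calc A (n + 1) * (m : ℝ) ^ (n + 1)
        = A (n + 1) + A (n + 1) * (((m : ℝ) - 1) * (c (n + 1) : ℝ)) := by
          rw [hgeom (n + 1)]; ring
      _ ≤ (c (n + 1) : ℝ) + A (n + 1) * (((m : ℝ) - 1) * (c (n + 1) : ℝ)) :=
          by linarith [hAle (n + 1)]
      _ = (1 + ((m : ℝ) - 1) * A (n + 1)) * (c (n + 1) : ℝ) := by ring
  have hup : ∀ n, B n ≤ t (n + 1) + r ^ (n + 1) := by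
    intro n
    have h1 : (((1 + ((m : ℝ) - 1) * A (n + 1)) - 1) * r ^ (n + 1)) ≤
        A (n + 1) / ((c (n + 1) : ℕ) : ℝ) := by
      rw [hPk (n + 1), ← div_eq_mul_inv, div_le_div_iff₀ (hPpos (n + 1)) (hcpos n)]
      calc ((1 + ((m : ℝ) - 1) * A (n + 1)) - 1) * (c (n + 1) : ℝ)
          = A (n + 1) * (((m : ℝ) - 1) * (c (n + 1) : ℝ)) := by ring
        _ = A (n + 1) * ((m : ℝ) ^ (n + 1) - 1) := by rw [hgeom (n + 1)]
        _ ≤ A (n + 1) * (m : ℝ) ^ (n + 1) := by nlinarith [hApos (n + 1)]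
    have hBeq : B n = ((1 + ((m : ℝ) - 1) * A (n + 1)) - 1) * r ^ (n + 1) + r ^ (n + 1) := by
      simp only [hBdef]
      ring
    have hteq : t (n + 1) = A (n + 1) / ((c (n + 1) : ℕ) : ℝ) := rfl
    rw [hBeq, hteq]
    linarith
  -- boundedness data
  have hBbb : Filter.IsBoundedUnder (· ≥ ·) Filter.atTop B :=
    Filter.isBoundedUnder_of ⟨0, fun n => hBlb n⟩
  have hBba : Filter.IsBoundedUnder (· ≤ ·) Filter.atTop B :=
    Filter.isBoundedUnder_of ⟨1, fun n => hBub n⟩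
  have hBcg : Filter.IsCoboundedUnder (· ≥ ·) Filter.atTop B := hBba.isCoboundedUnder_ge
  have htsb : Filter.IsBoundedUnder (· ≥ ·) Filter.atTop (fun n => t (n + 1)) :=
    Filter.isBoundedUnder_of ⟨0, fun n => htlb (n + 1)⟩
  have htsa : Filter.IsBoundedUnder (· ≤ ·) Filter.atTop (fun n => t (n + 1)) :=
    Filter.isBoundedUnder_of ⟨1, fun n => htub (n + 1)⟩
  have htscg : Filter.IsCoboundedUnder (· ≥ ·) Filter.atTop (fun n => t (n + 1)) :=
    htsa.isCoboundedUnder_ge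
  -- LHS is liminf t
  have hlhs : hdim m G = Filter.liminf t Filter.atTop := by
    rw [hdim]
    congr 1
    funext n
    rw [relindex_layerStab_gamma hm n]
    have hden : Real.logb m (((m ^ (∑ k ∈ Finset.range n, m ^ k) : ℕ) : ℝ))
        = ((∑ k ∈ Finset.range n, m ^ k : ℕ) : ℝ) := by
      rw [Nat.cast_pow, Real.logb_pow, Real.logb_self_eq_one hm1, mul_one]
    rw [hden]
  -- the shift
  have hshift : Filter.liminf (fun n => t (n + 1)) Filter.atTop = Filter.liminf t Filter.atTop :=
    Filter.liminf_nat_add t 1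
  -- liminf B = liminf t
  have hfin : Filter.liminf t Filter.atTop = Filter.liminf B Filter.atTop := by
    rw [← hshift]
    apply le_antisymm
    · exact Filter.liminf_le_liminf (Filter.Eventually.of_forall hlow) htsb hBcg
    · apply real_le_of_forall_pos_le_add
      intro ε hε
      have htend : Filter.Tendsto (fun n : ℕ => r ^ (n + 1)) Filter.atTop (nhds 0) := by
        have h0r : (0 : ℝ) ≤ r := by positivity
        have hr1 : r < 1 := by rw [hr]; exact inv_lt_one_of_one_lt₀ hm1
        exact (tendsto_pow_atTop_nhds_zero_of_lt_one h0r hr1).comp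
          (Filter.tendsto_add_atTop_nat 1)
      have hev : ∀ᶠ n in Filter.atTop, B n ≤ t (n + 1) + ε := by
        filter_upwards [htend.eventually_lt_const hε] with n hn
        have := hup n
        linarith
      calc Filter.liminf B Filter.atTop
          ≤ Filter.liminf (fun n => t (n + 1) + ε) Filter.atTop := by
            refine Filter.liminf_le_liminf hev hBbb ?_
            exact (Filter.isBoundedUnder_of ⟨1 + ε, fun n => by
              have := htub (n + 1); linarith⟩).isCoboundedUnder_ge
        _ = Filter.liminf (fun n => t (n + 1)) Filter.atTop + ε :=
            liminf_add_const Filter.atTop _ ε htscg htsb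
  -- assemble
  have hSeq : (fun n : ℕ => ∑ i ∈ Finset.Icc 1 n,
      ((m : ℝ) ^ (-(i : ℤ)) - (m : ℝ) ^ (-((n : ℤ) + 1))) * obstruction m G i)
      = fun n => 1 - B n := funext hS
  rw [hSeq, limsup_const_sub Filter.atTop B 1 hBcg hBbb, hlhs, hfin]
  ring
end Basilica
end
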